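/- The cell strategy answers reads correctly: every word in the language cell_v = (read·v)* · ( Σ_{n∈D} write(n)·ok·(read·n)* )* has the property that every read-answer pair in it returns the most recently written value, or the initial value v if no write has occurred before it. Formally: if a word w ∈ cell_v is written as u · read · m · u' , then m equals the value n of the last write(n) occurring in u, or m = v if u contains no write move. -/

import Mathlib

open Computability

/-- Moves of the variable game over a set of data values `D`:
`read`, `write n`, answers `ans n`, and `ok`. -/
inductive Move (D : Type*) where
  | read
  | write (n : D)
  | ans (n : D)
  | ok
deriving DecidableEq

open Move in
/-- `write(n)·ok·(read·n)*` : a write of `n` followed by reads answered by `n`. -/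
def writeBlock {D : Type*} (n : D) : Language (Move D) :=
  ({[write n, ok]} : Language (Move D)) * ({[read, ans n]} : Language (Move D))∗

open Move in
/-- `Σ_{n∈D} write(n)·ok·(read·n)*`. -/
def writeBlocks (D : Type*) : Language (Move D) :=
  ⋃ n : D, writeBlock n

open Move in
/-- The cell language `cell_v = (read·v)* · (Σ_{n∈D} write(n)·ok·(read·n)*)*`,
modelling a storage cell initialized to `v`. -/
def cellLang {D : Type*} (v : D) : Language (Move D) :=
  ({[read, ans v]} : Language (Move D))∗ * (writeBlocks D)∗

/-- Words traced by the cell automaton started in state `d`. -/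
inductive Good {D : Type*} : D → List (Move D) → Prop
  | nil (d : D) : Good d []
  | rd {d : D} {w : List (Move D)} : Good d w → Good d (Move.read :: Move.ans d :: w)
  | wr {d n : D} {w : List (Move D)} : Good n w → Good d (Move.write n :: Move.ok :: w)

/-- Last value written in a word, with default. -/
def lastWrite {D : Type*} : List (Move D) → D → D
  | [], d => d
  | (Move.write n) :: t, _ => lastWrite t n
  | _ :: t, d => lastWrite t d

lemma good_reads_append {D : Type*} {d : D} {w₁ w₂ : List (Move D)}
    (h₁ : w₁ ∈ (({[Move.read, Move.ans d]} : Language (Move D)))∗)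
    (h₂ : Good d w₂) : Good d (w₁ ++ w₂) := by
  rw [Language.mem_kstar] at h₁
  obtain ⟨L, rfl, hL⟩ := h₁
  induction L with
  | nil => simpa using h₂
  | cons a L ih =>
    have ha : a = [Move.read, Move.ans d] := hL a (by simp)
    subst ha
    have := ih (fun y hy => hL y (by simp [hy]))
    simpa using Good.rd this

lemma good_writeBlocks {D : Type*} {w : List (Move D)}
    (h : w ∈ (writeBlocks D)∗) : ∀ d : D, Good d w := by
  rw [Language.mem_kstar] at h
  obtain ⟨L, rfl, hL⟩ := h
  induction L with
  | nil => intro d; exact Good.nil d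
  | cons a L ih =>
    intro d
    have ha : a ∈ writeBlocks D := hL a (by simp)
    rw [writeBlocks] at ha; have ha : ∃ n, a ∈ writeBlock n := Set.mem_iUnion.mp ha
    obtain ⟨n, ha⟩ := ha
    rw [writeBlock, Language.mem_mul] at ha
    obtain ⟨x, hx, y, hy, rfl⟩ := ha
    have hx' : x = [Move.write n, Move.ok] := hx
    subst hx'
    have hrest : Good n (y ++ L.flatten) :=
      good_reads_append hy (ih (fun z hz => hL z (by simp [hz])) n)
    simpa using Good.wr hrest

lemma good_lastWrite {D : Type*} {d : D} {w : List (Move D)} (h : Good d w) :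
    ∀ u u' : List (Move D), ∀ m : D,
      w = u ++ [Move.read, Move.ans m] ++ u' → lastWrite u d = m := by
  induction h with
  | nil d => intro u u' m h; simp at h
  | @rd d w _ ih =>
    intro u u' m h
    rcases u with _ | ⟨x, _ | ⟨y, u₀⟩⟩
    · simp only [List.nil_append, List.cons_append, List.cons.injEq] at h
      cases h.2.1; rfl
    · simp only [List.cons_append, List.nil_append, List.cons.injEq] at h
      exact absurd h.2.1 (by simp)
    · simp only [List.cons_append, List.cons.injEq] at h
      obtain ⟨rfl, rfl, h⟩ := h
      simpa [lastWrite] using ih u₀ u' m h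
  | @wr d n w _ ih =>
    intro u u' m h
    rcases u with _ | ⟨x, _ | ⟨y, u₀⟩⟩
    · simp only [List.nil_append, List.cons_append, List.cons.injEq] at h
      exact absurd h.1 (by simp)
    · simp only [List.cons_append, List.nil_append, List.cons.injEq] at h
      exact absurd h.2.1 (by simp)
    · simp only [List.cons_append, List.cons.injEq] at h
      obtain ⟨rfl, rfl, h⟩ := h
      simpa [lastWrite] using ih u₀ u' m h

lemma lastWrite_no_write {D : Type*} {u : List (Move D)}
    (h : ∀ n : D, Move.write n ∉ u) (d : D) : lastWrite u d = d := by
  induction u with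
  | nil => rfl
  | cons x t ih =>
    have hx : ∀ n : D, Move.write n ∉ t := fun n hn => h n (by simp [hn])
    cases x with
    | write n => exact absurd (by simp) (h n)
    | read => simpa [lastWrite] using ih hx
    | ans k => simpa [lastWrite] using ih hx
    | ok => simpa [lastWrite] using ih hx

lemma lastWrite_append_write {D : Type*} (u₁ u₂ : List (Move D)) (n : D)
    (h : ∀ n' : D, Move.write n' ∉ u₂) (d : D) :
    lastWrite (u₁ ++ Move.write n :: u₂) d = n := by
  induction u₁ generalizing d with
  | nil => simpa [lastWrite] using lastWrite_no_write h n
  | cons x t ih =>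
    cases x with
    | write k => simpa [lastWrite] using ih k
    | read => simpa [lastWrite] using ih d
    | ans k => simpa [lastWrite] using ih d
    | ok => simpa [lastWrite] using ih d

theorem cell_answers_reads_correctly {D : Type*} (v : D)
    (w : List (Move D)) (hw : w ∈ cellLang v)
    (u u' : List (Move D)) (m : D)
    (hsplit : w = u ++ [Move.read, Move.ans m] ++ u') :
    ((∀ n : D, Move.write n ∉ u) → m = v) ∧
    (∀ (n : D) (u₁ u₂ : List (Move D)),
        u = u₁ ++ Move.write n :: u₂ → (∀ n' : D, Move.write n' ∉ u₂) →
        m = n) := by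
  have hgood : Good v w := by
    rw [cellLang, Language.mem_mul] at hw
    obtain ⟨x, hx, y, hy, rfl⟩ := hw
    exact good_reads_append hx (good_writeBlocks hy v)
  have key : lastWrite u v = m := good_lastWrite hgood u u' m hsplit
  constructor
  · intro h; rw [← key, lastWrite_no_write h]
  · intro n u₁ u₂ hu h
    rw [← key, hu, lastWrite_append_write _ _ _ h]
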